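/- arXiv:1107.2894 — 4 statements merged into one kernel-verified Lean document; each statement's English description precedes it below -/
import Mathlib

section
/- For every non-crossing partition π of {1,…,n} there exists a unique interval partition ρ of {1,…,n} such that π ≪ ρ. -/
/-- Non-crossing predicate for a partition of `{0,…,n-1}` (representing `{1,…,n}`). -/
def IsNC {n : ℕ} (π : Finpartition (Finset.univ : Finset (Fin n))) : Prop :=
  ∀ a b c d : Fin n, a < b → b < c → c < d →
    ∀ V ∈ π.parts, ∀ W ∈ π.parts, a ∈ V → c ∈ V → b ∈ W → d ∈ W → V = W

/-- Interval-partition predicate: every block is an interval of consecutive integers. -/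
def IsIntv {n : ℕ} (π : Finpartition (Finset.univ : Finset (Fin n))) : Prop :=
  ∀ V ∈ π.parts, ∀ a ∈ V, ∀ c ∈ V, ∀ b : Fin n, a ≤ b → b ≤ c → b ∈ V

/-- The relation `π ≪ ρ`: `π ≤ ρ` in the reverse refinement order, and every block `W` of `ρ`
contains a block `V` of `π` with `min W, max W ∈ V`. -/
def Ll {n : ℕ} (π ρ : Finpartition (Finset.univ : Finset (Fin n))) : Prop :=
  π ≤ ρ ∧ ∀ W ∈ ρ.parts, ∃ V ∈ π.parts, ∀ hW : W.Nonempty, W.min' hW ∈ V ∧ W.max' hW ∈ V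

namespace ExUniq

open Finset

attribute [local instance] Classical.propDecidable

variable {n : ℕ}

/-- `k` is a "cut point": every block of `π` lies entirely at or below `k`, or entirely above. -/
def NCut (π : Finpartition (Finset.univ : Finset (Fin n))) (k : ℕ) : Prop :=
  ∀ V ∈ π.parts, (∀ a ∈ V, (a : ℕ) ≤ k) ∨ (∀ a ∈ V, k < (a : ℕ))

/-- `i ~ j` iff there is no cut point strictly between them. -/
def Rel (π : Finpartition (Finset.univ : Finset (Fin n))) (i j : Fin n) : Prop :=
  ∀ k : ℕ, min (i : ℕ) (j : ℕ) ≤ k → k < max (i : ℕ) (j : ℕ) → ¬ NCut π k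

lemma Rel.refl' (π : Finpartition (Finset.univ : Finset (Fin n))) (i : Fin n) : Rel π i i :=
  fun _ h1 h2 _ => by omega

lemma Rel.symm' {π : Finpartition (Finset.univ : Finset (Fin n))} {i j : Fin n}
    (h : Rel π i j) : Rel π j i := fun k h1 h2 => h k (by omega) (by omega)

lemma Rel.trans' {π : Finpartition (Finset.univ : Finset (Fin n))} {i j l : Fin n}
    (hij : Rel π i j) (hjl : Rel π j l) : Rel π i l := by
  intro k h1 h2 hc
  rcases le_or_gt (min (i : ℕ) (j : ℕ)) k with h | h
  · rcases lt_or_ge k (max (i : ℕ) (j : ℕ)) with h' | h'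
    · exact hij k h h' hc
    · exact hjl k (by omega) (by omega) hc
  · exact hjl k (by omega) (by omega) hc

def relSetoid (π : Finpartition (Finset.univ : Finset (Fin n))) : Setoid (Fin n) :=
  ⟨Rel π, ⟨Rel.refl' π, Rel.symm', Rel.trans'⟩⟩

noncomputable def rho (π : Finpartition (Finset.univ : Finset (Fin n))) :
    Finpartition (Finset.univ : Finset (Fin n)) :=
  Finpartition.ofSetoid (relSetoid π)

/-- `i` and `j` lie in a common block of `ρ`. -/
def SameB (ρ : Finpartition (Finset.univ : Finset (Fin n))) (i j : Fin n) : Prop :=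
  ∃ W ∈ ρ.parts, i ∈ W ∧ j ∈ W

lemma mem_iff_sameB {ρ : Finpartition (Finset.univ : Finset (Fin n))} {W : Finset (Fin n)}
    (hW : W ∈ ρ.parts) {i : Fin n} (hi : i ∈ W) {j : Fin n} : j ∈ W ↔ SameB ρ i j :=
  ⟨fun hj => ⟨W, hW, hi, hj⟩,
   fun ⟨U, hU, hiU, hjU⟩ => (ρ.eq_of_mem_parts hW hU hi hiU) ▸ hjU⟩

lemma sameB_part (ρ : Finpartition (Finset.univ : Finset (Fin n))) (i j : Fin n) :
    SameB ρ i j ↔ j ∈ ρ.part i := by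
  constructor
  · rintro ⟨U, hU, hiU, hjU⟩
    rwa [ρ.part_eq_of_mem hU hiU]
  · intro hj
    exact ⟨ρ.part i, ρ.part_mem.2 (mem_univ i), ρ.mem_part (mem_univ i), hj⟩

lemma sameB_rho_iff (π : Finpartition (Finset.univ : Finset (Fin n))) (i j : Fin n) :
    SameB (rho π) i j ↔ Rel π i j := by
  rw [sameB_part]
  exact Finpartition.mem_part_ofSetoid_iff_rel

lemma eq_of_sameB {ρ ρ' : Finpartition (Finset.univ : Finset (Fin n))}
    (h : ∀ i j, SameB ρ i j ↔ SameB ρ' i j) : ρ = ρ' := by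
  have key : ∀ (σ σ' : Finpartition (Finset.univ : Finset (Fin n))),
      (∀ i j, SameB σ i j → SameB σ' i j) → σ ≤ σ' := by
    intro σ σ' hss W hW
    obtain ⟨i, hi⟩ := σ.nonempty_of_mem_parts hW
    refine ⟨σ'.part i, σ'.part_mem.2 (mem_univ i), fun j hj => ?_⟩
    exact (sameB_part σ' i j).1 (hss i j ⟨W, hW, hi, hj⟩)
  exact le_antisymm (key _ _ fun i j => (h i j).1) (key _ _ fun i j => (h i j).2)

lemma isIntv_rho (π : Finpartition (Finset.univ : Finset (Fin n))) : IsIntv (rho π) := by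
  intro V hV a ha c hc b hab hbc
  have hac : Rel π a c := (sameB_rho_iff π a c).1 ⟨V, hV, ha, hc⟩
  have hab' : (a : ℕ) ≤ (b : ℕ) := hab
  have hbc' : (b : ℕ) ≤ (c : ℕ) := hbc
  have hrel : Rel π a b := fun k h1 h2 => hac k (by omega) (by omega)
  exact (mem_iff_sameB hV ha).2 ((sameB_rho_iff π a b).2 hrel)

lemma le_rho (π : Finpartition (Finset.univ : Finset (Fin n))) : π ≤ rho π := by
  intro V hV
  obtain ⟨a, ha⟩ := π.nonempty_of_mem_parts hV
  refine ⟨(rho π).part a, (rho π).part_mem.2 (mem_univ a), fun b hb => ?_⟩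
  refine (sameB_part _ a b).1 ((sameB_rho_iff π a b).2 ?_)
  intro k h1 h2 hc
  rcases hc V hV with h | h
  · have h3 := h b hb; have h4 := h a ha; omega
  · have h3 := h a ha; have h4 := h b hb; omega

lemma not_ncut_elim {π : Finpartition (Finset.univ : Finset (Fin n))} {k : ℕ}
    (h : ¬ NCut π k) :
    ∃ U ∈ π.parts, (∃ x ∈ U, k < (x : ℕ)) ∧ (∃ y ∈ U, (y : ℕ) ≤ k) := by
  unfold NCut at h
  push_neg at h
  obtain ⟨U, hU, h1, h2⟩ := h
  obtain ⟨x, hx, hx'⟩ := h1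
  obtain ⟨y, hy, hy'⟩ := h2
  exact ⟨U, hU, ⟨x, hx, hx'⟩, ⟨y, hy, hy'⟩⟩

lemma minmax_rho (π : Finpartition (Finset.univ : Finset (Fin n))) (hπ : IsNC π) :
    ∀ W ∈ (rho π).parts, ∃ V ∈ π.parts,
      ∀ hW : W.Nonempty, W.min' hW ∈ V ∧ W.max' hW ∈ V := by
  intro W hW
  have hWne : W.Nonempty := (rho π).nonempty_of_mem_parts hW
  set m := W.min' hWne with hm
  set M := W.max' hWne with hM
  have hmW : m ∈ W := W.min'_mem hWne
  have hMW : M ∈ W := W.max'_mem hWne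
  set V := π.part m with hVdef
  have hV : V ∈ π.parts := π.part_mem.2 (mem_univ m)
  have hmV : m ∈ V := π.mem_part (mem_univ m)
  have hMV : M ∈ V := by
    -- V ⊆ W
    obtain ⟨W1, hW1, hVW1⟩ := le_rho π hV
    have hW1W : W1 = W := (ExUniq.rho π).eq_of_mem_parts hW1 hW (hVW1 hmV) hmW
    have hVW : V ⊆ W := hW1W ▸ hVW1
    have hVne : V.Nonempty := ⟨m, hmV⟩
    set M' := V.max' hVne with hM'
    have hM'V : M' ∈ V := V.max'_mem hVne
    have hM'W : M' ∈ W := hVW hM'V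
    have hM'leM : (M' : ℕ) ≤ (M : ℕ) := W.le_max' M' hM'W
    have hmleM' : (m : ℕ) ≤ (M' : ℕ) := V.le_max' m hmV
    by_contra hMVn
    have hlt : (M' : ℕ) < (M : ℕ) := by
      rcases lt_or_eq_of_le hM'leM with h | h
      · exact h
      · exact absurd ((Fin.ext h : M' = M) ▸ hM'V) hMVn
    have hrel : Rel π m M := (sameB_rho_iff π m M).1 ⟨W, hW, hmW, hMW⟩
    have hnc : ¬ NCut π (M' : ℕ) := hrel (M' : ℕ) (by omega) (by omega)
    obtain ⟨U, hU, ⟨x, hxU, hx⟩, ⟨y, hyU, hy⟩⟩ := not_ncut_elim hnc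
    obtain ⟨W2, hW2, hUW2⟩ := le_rho π hU
    have hM'W2 : M' ∈ W2 :=
      isIntv_rho π W2 hW2 y (hUW2 hyU) x (hUW2 hxU) M'
        (by exact hy) (le_of_lt (by exact hx))
    have hW2W : W2 = W := (ExUniq.rho π).eq_of_mem_parts hW2 hW hM'W2 hM'W
    have hyW : y ∈ W := hW2W ▸ hUW2 hyU
    have hmy : (m : ℕ) ≤ (y : ℕ) := W.min'_le y hyW
    have hVU : V = U → False := by
      intro hVU
      have hxV : x ∈ V := hVU ▸ hxU
      have := V.le_max' x hxV
      omega
    rcases eq_or_lt_of_le hmy with he | hmy'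
    · exact hVU (π.eq_of_mem_parts hV hU ((Fin.ext he : m = y) ▸ hmV) hyU)
    · rcases eq_or_lt_of_le hy with he2 | hyM'
      · exact hVU (π.eq_of_mem_parts hV hU ((Fin.ext he2 : y = M') ▸ hM'V) hyU)
      · exact hVU (hπ m y M' x hmy' hyM' hx V hV U hU hmV hM'V hyU hxU)
  exact ⟨V, hV, fun h => ⟨hmV, hMV⟩⟩

lemma sameB_imp_rel {π ρ' : Finpartition (Finset.univ : Finset (Fin n))}
    (hmm : ∀ W ∈ ρ'.parts, ∃ V ∈ π.parts,
      ∀ hW : W.Nonempty, W.min' hW ∈ V ∧ W.max' hW ∈ V)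
    {i j : Fin n} (h : SameB ρ' i j) : Rel π i j := by
  obtain ⟨W, hW, hi, hj⟩ := h
  intro k h1 h2 hc
  obtain ⟨V, hV, hVm⟩ := hmm W hW
  have hne : W.Nonempty := ⟨i, hi⟩
  obtain ⟨hminV, hmaxV⟩ := hVm hne
  have a1 : ((W.min' hne : Fin n) : ℕ) ≤ (i : ℕ) := W.min'_le i hi
  have a1' : ((W.min' hne : Fin n) : ℕ) ≤ (j : ℕ) := W.min'_le j hj
  have a2 : (i : ℕ) ≤ ((W.max' hne : Fin n) : ℕ) := W.le_max' i hi
  have a2' : (j : ℕ) ≤ ((W.max' hne : Fin n) : ℕ) := W.le_max' j hj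
  rcases hc V hV with h | h
  · have := h _ hmaxV; omega
  · have := h _ hminV; omega

lemma rel_imp_sameB {π ρ' : Finpartition (Finset.univ : Finset (Fin n))}
    (hIntv : IsIntv ρ') (hle : π ≤ ρ') {i j : Fin n} (hr : Rel π i j) : SameB ρ' i j := by
  have key : ∀ i j : Fin n, i ≤ j → Rel π i j → j ∈ ρ'.part i := by
    intro i j hij hr
    by_contra hj
    set W := ρ'.part i with hWdef
    have hW : W ∈ ρ'.parts := ρ'.part_mem.2 (mem_univ i)
    have hiW : i ∈ W := ρ'.mem_part (mem_univ i)
    have hne : W.Nonempty := ⟨i, hiW⟩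
    set M := W.max' hne with hMdef
    have hMW : M ∈ W := W.max'_mem hne
    have hiM : (i : ℕ) ≤ (M : ℕ) := W.le_max' i hiW
    have hMj : (M : ℕ) < (j : ℕ) := by
      by_contra hle'
      push_neg at hle'
      exact hj (hIntv W hW i hiW M hMW j hij hle')
    have hij' : (i : ℕ) ≤ (j : ℕ) := hij
    have hnc : ¬ NCut π (M : ℕ) := hr (M : ℕ) (by omega) (by omega)
    obtain ⟨U, hU, ⟨x, hxU, hx⟩, ⟨y, hyU, hy⟩⟩ := not_ncut_elim hnc
    obtain ⟨W2, hW2, hUW2⟩ := hle hU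
    have hMW2 : M ∈ W2 :=
      hIntv W2 hW2 y (hUW2 hyU) x (hUW2 hxU) M (by exact hy) (le_of_lt (by exact hx))
    have hW2W : W2 = W := ρ'.eq_of_mem_parts hW2 hW hMW2 hMW
    have hxW : x ∈ W := hW2W ▸ hUW2 hxU
    have := W.le_max' x hxW
    omega
  rcases le_total i j with h | h
  · exact (sameB_part ρ' i j).2 (key i j h hr)
  · have hji := key j i h hr.symm'
    exact ⟨ρ'.part j, ρ'.part_mem.2 (mem_univ j), hji, ρ'.mem_part (mem_univ j)⟩

end ExUniq

/-- For every non-crossing partition `π` of `{1,…,n}` there exists a unique interval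
partition `ρ` with `π ≪ ρ`. -/
theorem exists_unique_interval_ll (n : ℕ)
    (π : Finpartition (Finset.univ : Finset (Fin n))) (hπ : IsNC π) :
    ∃! ρ : Finpartition (Finset.univ : Finset (Fin n)), IsIntv ρ ∧ Ll π ρ := by
  refine ⟨ExUniq.rho π,
    ⟨ExUniq.isIntv_rho π, ExUniq.le_rho π, ExUniq.minmax_rho π hπ⟩, ?_⟩
  rintro ρ' ⟨hIntv, hle, hmm⟩
  apply ExUniq.eq_of_sameB
  intro i j
  constructor
  · intro h
    exact (ExUniq.sameB_rho_iff π i j).2 (ExUniq.sameB_imp_rel hmm h)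
  · intro h
    exact ExUniq.rel_imp_sameB hIntv hle ((ExUniq.sameB_rho_iff π i j).1 h)
end

section
/- The maximal elements of the poset (NC(n), ≪) are exactly the interval partitions of {1,…,n}. -/
/-- The maximal elements of the poset `(NC(n), ≪)` are exactly the interval partitions. -/
theorem ll_maximal_iff_interval (n : ℕ)
    (π : Finpartition (Finset.univ : Finset (Fin n))) (hπ : IsNC π) :
    (∀ ρ : Finpartition (Finset.univ : Finset (Fin n)), IsNC ρ → Ll π ρ → ρ = π) ↔
      IsIntv π := by
  classical
  constructor
  · -- maximal → interval
    intro hmax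
    by_contra hnot
    unfold IsIntv at hnot
    push_neg at hnot
    obtain ⟨V, hV, a0, ha0, c0, hc0, b0, hab0, hbc0, hb0⟩ := hnot
    have hVne : V.Nonempty := ⟨a0, ha0⟩
    -- the smallest "gap" element
    set S : Finset (Fin n) :=
      Finset.univ.filter (fun x => x ∉ V ∧ a0 ≤ x ∧ x ≤ c0) with hS
    have hSne : S.Nonempty := ⟨b0, by simp [hS, hb0, hab0, hbc0]⟩
    set g : Fin n := S.min' hSne with hgdef
    have hgmem : g ∈ S := S.min'_mem hSne
    have hgV : g ∉ V := by
      have := hgmem; rw [hS, Finset.mem_filter] at this; exact this.2.1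
    have hag : a0 ≤ g := by
      have := hgmem; rw [hS, Finset.mem_filter] at this; exact this.2.2.1
    have hgc : g ≤ c0 := by
      have := hgmem; rw [hS, Finset.mem_filter] at this; exact this.2.2.2
    have hag' : a0 < g := lt_of_le_of_ne hag (fun h => hgV (h ▸ ha0))
    have hgc' : g < c0 := lt_of_le_of_ne hgc (fun h => hgV (h ▸ hc0))
    have hg1 : 0 < (g : ℕ) := lt_of_le_of_lt (Nat.zero_le _) hag'
    -- predecessor of g
    set p : Fin n := ⟨(g : ℕ) - 1, lt_of_le_of_lt (Nat.sub_le _ _) g.isLt⟩ with hpdef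
    have hpval : (p : ℕ) = (g : ℕ) - 1 := rfl
    have hpg : p < g := by rw [Fin.lt_def]; omega
    have hpV : p ∈ V := by
      by_contra hpV
      have hpS : p ∈ S := by
        rw [hS, Finset.mem_filter]
        refine ⟨Finset.mem_univ _, hpV, ?_, le_of_lt (lt_of_lt_of_le hpg hgc)⟩
        rw [Fin.le_def]; have := Fin.lt_def.mp hag'; omega
      exact absurd (S.min'_le p hpS) (not_le.mpr hpg)
    -- B: the block of g
    obtain ⟨B, hB, hgB⟩ := π.exists_mem (Finset.mem_univ g)
    have hVB : V ≠ B := fun h => hgV (h ▸ hgB)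
    have hBne : B.Nonempty := ⟨g, hgB⟩
    set minV := V.min' hVne with hminV
    set maxV := V.max' hVne with hmaxV
    set minB := B.min' hBne with hminB
    set maxB := B.max' hBne with hmaxB
    have hminVmem : minV ∈ V := V.min'_mem hVne
    have hmaxVmem : maxV ∈ V := V.max'_mem hVne
    have hminBmem : minB ∈ B := B.min'_mem hBne
    have hmaxBmem : maxB ∈ B := B.max'_mem hBne
    have hdis : ∀ P ∈ π.parts, ∀ Q ∈ π.parts, P ≠ Q → ∀ x, x ∈ P → x ∈ Q → False :=
      fun P hP Q hQ hPQ x hxP hxQ => hPQ (π.eq_of_mem_parts hP hQ hxP hxQ)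
    -- every element of B lies strictly between minV and maxV
    have hBbound : ∀ e ∈ B, minV < e ∧ e < maxV := by
      intro e he
      have heV : e ∉ V := fun h => hVB (π.eq_of_mem_parts hV hB h he)
      constructor
      · by_contra h
        have h1 : e < minV := lt_of_le_of_ne (not_lt.mp h) (fun h' => heV (h' ▸ hminVmem))
        have h2 : e < a0 := lt_of_lt_of_le h1 (V.min'_le a0 ha0)
        exact hVB (hπ e a0 g c0 h2 hag' hgc' B hB V hV he hgB ha0 hc0).symm
      · by_contra h
        have h1 : maxV < e := lt_of_le_of_ne (not_lt.mp h) (fun h' => heV (h'.symm ▸ hmaxVmem))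
        have h2 : c0 < e := lt_of_le_of_lt (V.le_max' c0 hc0) h1
        exact hVB (hπ a0 g c0 e hag' hgc' h2 V hV B hB ha0 hc0 hgB he)
    have hgmaxB : g ≤ maxB := B.le_max' g hgB
    have hminBg : minB ≤ g := B.min'_le g hgB
    -- the merged partition
    set M : Finset (Fin n) := V ∪ B with hM
    have hMne : M.Nonempty := ⟨a0, Finset.mem_union_left _ ha0⟩
    have hMold : ∀ W ∈ π.parts, W ≠ V → W ≠ B → Disjoint M W := by
      intro W hW h1 h2
      rw [hM, Finset.disjoint_union_left]
      constructor
      · rw [Finset.disjoint_left]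
        exact fun x hx hx' => hdis V hV W hW (Ne.symm h1) x hx hx'
      · rw [Finset.disjoint_left]
        exact fun x hx hx' => hdis B hB W hW (Ne.symm h2) x hx hx'
    set E : Finset (Finset (Fin n)) := (π.parts.erase V).erase B with hE
    have hEmem : ∀ x, x ∈ E ↔ x ∈ π.parts ∧ x ≠ V ∧ x ≠ B := by
      intro x
      rw [hE, Finset.mem_erase, Finset.mem_erase]
      tauto
    set parts' : Finset (Finset (Fin n)) := insert M E with hparts'
    have hmem' : ∀ x, x ∈ parts' ↔ x = M ∨ (x ∈ π.parts ∧ x ≠ V ∧ x ≠ B) := by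
      intro x
      rw [hparts', Finset.mem_insert, hEmem]
    have hsupIndep : parts'.SupIndep id := by
      rw [Finset.supIndep_iff_pairwiseDisjoint]
      intro x hx y hy hxy
      rw [Finset.mem_coe, hmem'] at hx hy
      rcases hx with rfl | ⟨hx1, hx2, hx3⟩
      · rcases hy with rfl | ⟨hy1, hy2, hy3⟩
        · exact absurd rfl hxy
        · exact hMold y hy1 hy2 hy3
      · rcases hy with rfl | ⟨hy1, hy2, hy3⟩
        · exact (hMold x hx1 hx2 hx3).symm
        · refine Finset.disjoint_left.mpr ?_
          intro z hz hz'
          exact hdis x hx1 y hy1 hxy z hz hz'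
    have hsup : parts'.sup id = (Finset.univ : Finset (Fin n)) := by
      apply Finset.Subset.antisymm
      · intro x _
        exact Finset.mem_univ x
      · intro x _
        rw [Finset.mem_sup]
        obtain ⟨P, hP, hxP⟩ := π.exists_mem (Finset.mem_univ x)
        by_cases h1 : P = V
        · exact ⟨M, (hmem' M).mpr (Or.inl rfl), Finset.mem_union_left _ (h1 ▸ hxP)⟩
        by_cases h2 : P = B
        · exact ⟨M, (hmem' M).mpr (Or.inl rfl), Finset.mem_union_right _ (h2 ▸ hxP)⟩
        · exact ⟨P, (hmem' P).mpr (Or.inr ⟨hP, h1, h2⟩), hxP⟩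
    have hnotbot : ⊥ ∉ parts' := by
      rw [hparts', Finset.mem_insert]
      rintro (h | h)
      · rw [← h] at hMne
        exact Finset.not_nonempty_empty hMne
      · exact π.bot_notMem ((hEmem ⊥).mp h).1
    set ρ : Finpartition (Finset.univ : Finset (Fin n)) :=
      ⟨parts', hsupIndep, hsup, hnotbot⟩ with hρ
    have hρparts : ∀ x, x ∈ ρ.parts ↔ x = M ∨ (x ∈ π.parts ∧ x ≠ V ∧ x ≠ B) := hmem'
    -- ρ is noncrossing
    have hρNC : IsNC ρ := by
      intro a b c d hab hbc hcd X hX Y hY haX hcX hbY hdY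
      rw [hρparts] at hX hY
      rcases hX with rfl | ⟨hX1, hX2, hX3⟩
      · rcases hY with rfl | ⟨hY1, hY2, hY3⟩
        · rfl
        · -- a, c ∈ M = V ∪ B ; b, d ∈ Y (old part, ≠ V, B)
          exfalso
          have hdY' : d ∉ V := fun h => hY2 (π.eq_of_mem_parts hY1 hV hdY h)
          have hbY' : b ∉ V := fun h => hY2 (π.eq_of_mem_parts hY1 hV hbY h)
          have hdYB : d ∉ B := fun h => hY3 (π.eq_of_mem_parts hY1 hB hdY h)
          have hbYB : b ∉ B := fun h => hY3 (π.eq_of_mem_parts hY1 hB hbY h)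
          rcases Finset.mem_union.mp haX with haV | haB
          · rcases Finset.mem_union.mp hcX with hcV | hcB
            · exact hY2 (hπ a b c d hab hbc hcd V hV Y hY1 haV hcV hbY hdY).symm
            · -- a ∈ V, c ∈ B
              rcases lt_or_gt_of_ne (show d ≠ maxV from fun h => hdY' (h ▸ hmaxVmem)) with hd | hd
              · -- d < maxV
                rcases lt_or_gt_of_ne (show b ≠ minB from fun h => hbYB (h ▸ hminBmem)) with hb | hb
                · -- b < minB
                  rcases lt_or_gt_of_ne (show d ≠ maxB from fun h => hdYB (h ▸ hmaxBmem)) with hd2 | hd2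
                  · exact hY3 (hπ b c d maxB hbc hcd hd2 Y hY1 B hB hbY hdY hcB hmaxBmem)
                  · -- maxB < d : use p
                    have hbp : b < p := by
                      have h1 : (b : ℕ) < (minB : ℕ) := hb
                      have h2 : (minB : ℕ) ≤ (g : ℕ) := hminBg
                      have h3 : (b : ℕ) ≠ (p : ℕ) :=
                        fun h => hbY' (by rw [show b = p from Fin.ext h]; exact hpV)
                      rw [Fin.lt_def]
                      omega
                    have hpd : p < d := by
                      have h1 : (p : ℕ) < (g : ℕ) := hpg
                      have h2 : (g : ℕ) ≤ (maxB : ℕ) := hgmaxB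
                      have h3 : (maxB : ℕ) < (d : ℕ) := hd2
                      rw [Fin.lt_def]
                      omega
                    exact hY2 (hπ b p d maxV hbp hpd hd Y hY1 V hV hbY hdY hpV hmaxVmem)
                · -- minB < b
                  exact hY3 (hπ minB b c d hb hbc hcd B hB Y hY1 hminBmem hcB hbY hdY).symm
              · -- maxV < d
                have hbmaxV : b < maxV := lt_trans hbc (hBbound c hcB).2
                exact hY2 (hπ a b maxV d hab hbmaxV hd V hV Y hY1 haV hmaxVmem hbY hdY).symm
          · -- a ∈ B
            have hminVb : minV < b := lt_trans (hBbound a haB).1 hab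
            rcases Finset.mem_union.mp hcX with hcV | hcB
            · exact hY2 (hπ minV b c d hminVb hbc hcd V hV Y hY1 hminVmem hcV hbY hdY).symm
            · exact hY3 (hπ a b c d hab hbc hcd B hB Y hY1 haB hcB hbY hdY).symm
      · rcases hY with rfl | ⟨hY1, hY2, hY3⟩
        · -- b, d ∈ M ; a, c ∈ X (old part)
          exfalso
          have haX' : a ∉ V := fun h => hX2 (π.eq_of_mem_parts hX1 hV haX h)
          have hcX' : c ∉ V := fun h => hX2 (π.eq_of_mem_parts hX1 hV hcX h)
          have haXB : a ∉ B := fun h => hX3 (π.eq_of_mem_parts hX1 hB haX h)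
          have hcXB : c ∉ B := fun h => hX3 (π.eq_of_mem_parts hX1 hB hcX h)
          rcases Finset.mem_union.mp hbY with hbV | hbB
          · rcases Finset.mem_union.mp hdY with hdV | hdB
            · exact hX2 (hπ a b c d hab hbc hcd X hX1 V hV haX hcX hbV hdV)
            · -- b ∈ V, d ∈ B
              have hcmaxV : c < maxV := lt_trans hcd (hBbound d hdB).2
              exact hX2 (hπ a b c maxV hab hbc hcmaxV X hX1 V hV haX hcX hbV hmaxVmem)
          · rcases Finset.mem_union.mp hdY with hdV | hdB
            · -- b ∈ B, d ∈ V
              rcases lt_or_gt_of_ne (show c ≠ maxB from fun h => hcXB (h ▸ hmaxBmem)) with hc | hc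
              · exact hX3 (hπ a b c maxB hab hbc hc X hX1 B hB haX hcX hbB hmaxBmem)
              · -- maxB < c
                rcases lt_or_gt_of_ne (show a ≠ p from fun h => haX' (h ▸ hpV)) with ha | ha
                · have hpc : p < c := by
                    have h1 : (p : ℕ) < (g : ℕ) := hpg
                    have h2 : (g : ℕ) ≤ (maxB : ℕ) := hgmaxB
                    have h3 : (maxB : ℕ) < (c : ℕ) := hc
                    rw [Fin.lt_def]
                    omega
                  exact hX2 (hπ a p c d ha hpc hcd X hX1 V hV haX hcX hpV hdV)
                · -- p < a, so g < a
                  have hminBa : minB < a := by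
                    have h1 : (p : ℕ) < (a : ℕ) := ha
                    have h2 : (minB : ℕ) ≤ (g : ℕ) := hminBg
                    have h3 : (a : ℕ) ≠ (g : ℕ) :=
                      fun h => haXB (by rw [show a = g from Fin.ext h]; exact hgB)
                    have h4 : 0 < (g : ℕ) := hg1
                    rw [Fin.lt_def]
                    have h5 : (p : ℕ) = (g : ℕ) - 1 := hpval
                    omega
                  exact hX3 (hπ minB a b c hminBa hab hbc B hB X hX1 hminBmem hbB haX hcX).symm
            · exact hX3 (hπ a b c d hab hbc hcd X hX1 B hB haX hcX hbB hdB)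
        · exact hπ a b c d hab hbc hcd X hX1 Y hY1 haX hcX hbY hdY
    -- Ll π ρ
    have hll : Ll π ρ := by
      constructor
      · intro P hP
        by_cases h1 : P = V
        · exact ⟨M, (hρparts M).mpr (Or.inl rfl), h1 ▸ Finset.subset_union_left⟩
        by_cases h2 : P = B
        · exact ⟨M, (hρparts M).mpr (Or.inl rfl), h2 ▸ Finset.subset_union_right⟩
        · exact ⟨P, (hρparts P).mpr (Or.inr ⟨hP, h1, h2⟩), le_refl P⟩
      · intro W hW
        rw [hρparts] at hW
        rcases hW with rfl | ⟨hW1, _, _⟩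
        · refine ⟨V, hV, fun hWne => ⟨?_, ?_⟩⟩
          · rcases Finset.mem_union.mp (M.min'_mem hWne) with h | h
            · exact h
            · exfalso
              have h1 : minV < M.min' hWne := (hBbound _ h).1
              have h2 : M.min' hWne ≤ minV :=
                M.min'_le minV (Finset.mem_union_left _ hminVmem)
              exact absurd h2 (not_le.mpr h1)
          · rcases Finset.mem_union.mp (M.max'_mem hWne) with h | h
            · exact h
            · exfalso
              have h1 : M.max' hWne < maxV := (hBbound _ h).2
              have h2 : maxV ≤ M.max' hWne :=
                M.le_max' maxV (Finset.mem_union_left _ hmaxVmem)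
              exact absurd h2 (not_le.mpr h1)
        · exact ⟨W, hW1, fun hWne => ⟨W.min'_mem hWne, W.max'_mem hWne⟩⟩
    -- derive the contradiction
    have heq := hmax ρ hρNC hll
    have hMρ : M ∈ ρ.parts := (hρparts M).mpr (Or.inl rfl)
    rw [heq] at hMρ
    have : V = M := π.eq_of_mem_parts hV hMρ ha0 (Finset.mem_union_left _ ha0)
    exact hgV (this ▸ (Finset.mem_union_right V hgB : g ∈ M))
  · -- interval → maximal
    intro hint ρ hρNC hll
    obtain ⟨hle, hcond⟩ := hll
    refine le_antisymm ?_ hle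
    intro W hW
    obtain ⟨V, hV, h⟩ := hcond W hW
    have hWne := ρ.nonempty_of_mem_parts hW
    obtain ⟨hmin, hmax⟩ := h hWne
    refine ⟨V, hV, fun x hx => ?_⟩
    exact hint V hV _ hmin _ hmax x (W.min'_le x hx) (W.le_max' x hx)
end

section
/- Let π ∈ NC(n) with π ≪ 1ₙ and let V_o(π) be its unique outer block. Then the map ρ ↦ {V ∈ π : V is ρ-special} is a bijection from the set {ρ ∈ NC(n) : π ≪ ρ ≪ 1ₙ} onto the collection of subsets 𝔙 of the blocks of π with V_o(π) ∈ 𝔙. -/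
/-- Given `π ≪ ρ`, a block `V` of `π` is `ρ`-special when some block `W` of `ρ` has
`min V = min W` and `max V = max W`. -/
def IsSpecial {n : ℕ} (ρ : Finpartition (Finset.univ : Finset (Fin n)))
    (V : Finset (Fin n)) : Prop :=
  ∃ W ∈ ρ.parts, V.min = W.min ∧ V.max = W.max

namespace NCAux

open Finset

variable {n : ℕ}

/-- min of a finset of `Fin (n+1)`, defaulting to 0. -/
def lo (V : Finset (Fin (n + 1))) : Fin (n + 1) := WithTop.untopD 0 V.min
/-- max of a finset of `Fin (n+1)`, defaulting to 0. -/
def hi (V : Finset (Fin (n + 1))) : Fin (n + 1) := WithBot.unbotD 0 V.max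

lemma min_eq_lo {V : Finset (Fin (n + 1))} (h : V.Nonempty) :
    V.min = (lo V : WithTop (Fin (n+1))) := by
  rw [lo, ← Finset.coe_min' h, WithTop.untopD_coe]

lemma max_eq_hi {V : Finset (Fin (n + 1))} (h : V.Nonempty) :
    V.max = (hi V : WithBot (Fin (n+1))) := by
  rw [hi, ← Finset.coe_max' h, WithBot.unbotD_coe]

lemma min'_eq_lo {V : Finset (Fin (n + 1))} (h : V.Nonempty) : V.min' h = lo V := by
  have := min_eq_lo h
  rw [← Finset.coe_min' h] at this
  exact_mod_cast this

lemma max'_eq_hi {V : Finset (Fin (n + 1))} (h : V.Nonempty) : V.max' h = hi V := by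
  have := max_eq_hi h
  rw [← Finset.coe_max' h] at this
  exact_mod_cast this

lemma lo_mem {V : Finset (Fin (n + 1))} (h : V.Nonempty) : lo V ∈ V := by
  rw [← min'_eq_lo h]; exact V.min'_mem h

lemma hi_mem {V : Finset (Fin (n + 1))} (h : V.Nonempty) : hi V ∈ V := by
  rw [← max'_eq_hi h]; exact V.max'_mem h

lemma lo_le {V : Finset (Fin (n + 1))} {x : Fin (n+1)} (hx : x ∈ V) : lo V ≤ x := by
  rw [← min'_eq_lo ⟨x, hx⟩]; exact Finset.min'_le _ _ hx

lemma le_hi {V : Finset (Fin (n + 1))} {x : Fin (n+1)} (hx : x ∈ V) : x ≤ hi V := by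
  rw [← max'_eq_hi ⟨x, hx⟩]; exact Finset.le_max' _ _ hx

lemma lo_eq_of_min_eq {V W : Finset (Fin (n+1))} (h : V.min = W.min) : lo V = lo W := by
  unfold lo; rw [h]

lemma hi_eq_of_max_eq {V W : Finset (Fin (n+1))} (h : V.max = W.max) : hi V = hi W := by
  unfold hi; rw [h]

/-- `U` encloses `V` in span. -/
def encl (U V : Finset (Fin (n + 1))) : Prop := lo U ≤ lo V ∧ hi V ≤ hi U

/-- span length. -/
def key (U : Finset (Fin (n + 1))) : ℕ := (hi U : ℕ) - (lo U : ℕ)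

variable {π ρ : Finpartition (Finset.univ : Finset (Fin (n + 1)))}

/-- The workhorse laminarity lemma. -/
lemma lemL (hπ : IsNC π) {V W : Finset (Fin (n+1))} (hV : V ∈ π.parts) (hW : W ∈ π.parts)
    (hne : V ≠ W) {x : Fin (n+1)} (hx : x ∈ V) (h1 : lo W ≤ x) (h2 : x ≤ hi W) :
    encl W V := by
  have hVne : V.Nonempty := ⟨x, hx⟩
  have hWne : W.Nonempty := π.nonempty_of_mem_parts hW
  have hxW : x ∉ W := fun h => hne (π.eq_of_mem_parts hV hW hx h)
  have h1' : lo W < x := lt_of_le_of_ne h1 (fun h => hxW (h ▸ lo_mem hWne))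
  have h2' : x < hi W := lt_of_le_of_ne h2 (fun h => hxW (h ▸ hi_mem hWne))
  constructor
  · by_contra hcon
    push_neg at hcon
    exact hne (hπ (lo V) (lo W) x (hi W) hcon h1' h2' V hV W hW (lo_mem hVne) hx
      (lo_mem hWne) (hi_mem hWne))
  · by_contra hcon
    push_neg at hcon
    exact hne ((hπ (lo W) x (hi W) (hi V) h1' h2' hcon W hW V hV (lo_mem hWne)
      (hi_mem hWne) hx (hi_mem hVne)).symm)

lemma eq_of_encl_key {U U' : Finset (Fin (n+1))} (hU : U ∈ π.parts) (hU' : U' ∈ π.parts)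
    (he : encl U' U) (hk : key U' ≤ key U) : U = U' := by
  have hUne : U.Nonempty := π.nonempty_of_mem_parts hU
  have hU'ne : U'.Nonempty := π.nonempty_of_mem_parts hU'
  have h1 : (lo U' : ℕ) ≤ (lo U : ℕ) := he.1
  have h2 : (hi U : ℕ) ≤ (hi U' : ℕ) := he.2
  have h3 : (lo U : ℕ) ≤ (hi U : ℕ) := lo_le (hi_mem hUne)
  have hlo : (lo U : ℕ) = (lo U' : ℕ) := by unfold key at hk; omega
  have hlo' : lo U = lo U' := Fin.ext hlo
  exact π.eq_of_mem_parts hU hU' (lo_mem hUne) (hlo' ▸ lo_mem hU'ne)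

/-- candidates: blocks from `𝔙` enclosing `V`. -/
noncomputable def cand (π : Finpartition (Finset.univ : Finset (Fin (n + 1))))
    (𝔙 : Set (Finset (Fin (n+1)))) (V : Finset (Fin (n + 1))) : Finset (Finset (Fin (n+1))) :=
  @Finset.filter _ (fun U => U ∈ 𝔙 ∧ encl U V) (Classical.decPred _) π.parts

lemma mem_cand {𝔙 : Set (Finset (Fin (n+1)))} {V U : Finset (Fin (n+1))} :
    U ∈ cand π 𝔙 V ↔ U ∈ π.parts ∧ U ∈ 𝔙 ∧ encl U V := by
  simp [cand, Finset.mem_filter]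

/-- the minimal-span candidate. -/
noncomputable def fV (π : Finpartition (Finset.univ : Finset (Fin (n + 1))))
    (𝔙 : Set (Finset (Fin (n+1)))) (V : Finset (Fin (n + 1))) : Finset (Fin (n+1)) :=
  if h : (cand π 𝔙 V).Nonempty then ((cand π 𝔙 V).exists_min_image key h).choose else ∅

lemma fV_mem_cand {𝔙 : Set (Finset (Fin (n+1)))} {V : Finset (Fin (n+1))}
    (h : (cand π 𝔙 V).Nonempty) : fV π 𝔙 V ∈ cand π 𝔙 V := by
  rw [fV, dif_pos h]
  exact ((cand π 𝔙 V).exists_min_image key h).choose_spec.1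

lemma fV_min {𝔙 : Set (Finset (Fin (n+1)))} {V U : Finset (Fin (n+1))}
    (hU : U ∈ cand π 𝔙 V) : key (fV π 𝔙 V) ≤ key U := by
  have h : (cand π 𝔙 V).Nonempty := ⟨U, hU⟩
  rw [fV, dif_pos h]
  exact ((cand π 𝔙 V).exists_min_image key h).choose_spec.2 U hU

lemma f_eq_of (hπ : IsNC π) {𝔙 : Set (Finset (Fin (n+1)))} {V U : Finset (Fin (n+1))}
    (hV : V ∈ π.parts) (hU : U ∈ cand π 𝔙 V) (hk : key U ≤ key (fV π 𝔙 V)) :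
    U = fV π 𝔙 V := by
  have h : (cand π 𝔙 V).Nonempty := ⟨U, hU⟩
  set U' := fV π 𝔙 V with hU'def
  have hU' : U' ∈ cand π 𝔙 V := fV_mem_cand h
  have hUc := hU
  have hU'c := hU'
  rw [mem_cand] at hU hU'
  by_cases heq : U = U'
  · exact heq
  have hVne : V.Nonempty := π.nonempty_of_mem_parts hV
  rcases le_total (lo U) (lo U') with hc | hc
  · have hloU' : lo U' ≤ hi U := le_trans (le_trans hU'.2.2.1 (lo_le (hi_mem hVne))) hU.2.2.2
    have he : encl U U' :=
      lemL hπ hU'.1 hU.1 (Ne.symm heq) (lo_mem (π.nonempty_of_mem_parts hU'.1)) hc hloU'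
    exact (eq_of_encl_key hU'.1 hU.1 he hk).symm
  · have hloU : lo U ≤ hi U' := le_trans (le_trans hU.2.2.1 (lo_le (hi_mem hVne))) hU'.2.2.2
    have he : encl U' U := lemL hπ hU.1 hU'.1 heq (lo_mem (π.nonempty_of_mem_parts hU.1)) hc hloU
    exact eq_of_encl_key hU.1 hU'.1 he (fV_min hUc)

lemma fV_self (hπ : IsNC π) {𝔙 : Set (Finset (Fin (n+1)))} {U : Finset (Fin (n+1))}
    (hU : U ∈ π.parts) (hU𝔙 : U ∈ 𝔙) : fV π 𝔙 U = U := by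
  have hc : U ∈ cand π 𝔙 U := mem_cand.2 ⟨hU, hU𝔙, le_refl _, le_refl _⟩
  have hf := fV_mem_cand (π := π) ⟨U, hc⟩
  rw [mem_cand] at hf
  exact (eq_of_encl_key hU hf.1 hf.2.2 (fV_min hc)).symm

/-- the set of special blocks. -/
def Sp (π ρ : Finpartition (Finset.univ : Finset (Fin (n + 1)))) : Set (Finset (Fin (n+1))) :=
  {V | V ∈ π.parts ∧ IsSpecial ρ V}

lemma claimA (hπ : IsNC π) (hρ : IsNC ρ) (hl : Ll π ρ) (x : Fin (n+1)) :
    fV π (Sp π ρ) (π.part x) ∈ π.parts ∧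
    lo (fV π (Sp π ρ) (π.part x)) = lo (ρ.part x) ∧
    hi (fV π (Sp π ρ) (π.part x)) = hi (ρ.part x) := by
  set W := ρ.part x with hWdef
  have hW : W ∈ ρ.parts := ρ.part_mem.2 (mem_univ x)
  have hxW : x ∈ W := ρ.mem_part (mem_univ x)
  have hWne : W.Nonempty := ⟨x, hxW⟩
  obtain ⟨Uw, hUwp, hUwmm⟩ := hl.2 W hW
  obtain ⟨hminUw, hmaxUw⟩ := hUwmm hWne
  rw [min'_eq_lo hWne] at hminUw
  rw [max'_eq_hi hWne] at hmaxUw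
  have hUwne : Uw.Nonempty := π.nonempty_of_mem_parts hUwp
  obtain ⟨W0, hW0, hsub⟩ := hl.1 hUwp
  have hW0W : W0 = W := ρ.eq_of_mem_parts hW0 hW (hsub hminUw) (lo_mem hWne)
  rw [hW0W] at hsub
  have hloUw : lo Uw = lo W := le_antisymm (lo_le hminUw) (lo_le (hsub (lo_mem hUwne)))
  have hhiUw : hi Uw = hi W := le_antisymm (le_hi (hsub (hi_mem hUwne))) (le_hi hmaxUw)
  have hUwSp : Uw ∈ Sp π ρ := by
    refine ⟨hUwp, W, hW, ?_, ?_⟩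
    · rw [min_eq_lo hUwne, min_eq_lo hWne, hloUw]
    · rw [max_eq_hi hUwne, max_eq_hi hWne, hhiUw]
  set V := π.part x with hVdef
  have hV : V ∈ π.parts := π.part_mem.2 (mem_univ x)
  have hxV : x ∈ V := π.mem_part (mem_univ x)
  have hVne : V.Nonempty := ⟨x, hxV⟩
  obtain ⟨W1, hW1, hsubV⟩ := hl.1 hV
  have hW1W : W1 = W := ρ.eq_of_mem_parts hW1 hW (hsubV hxV) hxW
  rw [hW1W] at hsubV
  have hUwc : Uw ∈ cand π (Sp π ρ) V := by
    refine mem_cand.2 ⟨hUwp, hUwSp, ?_, ?_⟩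
    · rw [hloUw]; exact lo_le (hsubV (lo_mem hVne))
    · rw [hhiUw]; exact le_hi (hsubV (hi_mem hVne))
  set U' := fV π (Sp π ρ) V with hU'def
  have hU'c : U' ∈ cand π (Sp π ρ) V := fV_mem_cand ⟨Uw, hUwc⟩
  rw [mem_cand] at hU'c
  obtain ⟨hU'p, hU'Sp, hU'e⟩ := hU'c
  have hU'ne : U'.Nonempty := π.nonempty_of_mem_parts hU'p
  obtain ⟨_, W', hW', hminEq, hmaxEq⟩ := hU'Sp
  have hW'ne : W'.Nonempty := ρ.nonempty_of_mem_parts hW'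
  have hloW' : lo U' = lo W' := lo_eq_of_min_eq hminEq
  have hhiW' : hi U' = hi W' := hi_eq_of_max_eq hmaxEq
  have key : U' = Uw := by
    by_cases hq : U' = Uw
    · exact hq
    rcases le_total (lo U') (lo Uw) with hc | hc
    · have h1 : lo Uw ≤ hi U' := by
        rw [hloUw]
        exact le_trans (lo_le (hsubV (lo_mem hVne))) (le_trans (lo_le (hi_mem hVne)) hU'e.2)
      have he : encl U' Uw := lemL hπ hUwp hU'p (fun h => hq h.symm) (lo_mem hUwne) hc h1
      exact (eq_of_encl_key hUwp hU'p he (fV_min hUwc)).symm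
    · have h1 : lo U' ≤ hi Uw := by
        rw [hhiUw]
        exact le_trans hU'e.1 (le_trans (lo_le (hi_mem hVne)) (le_hi (hsubV (hi_mem hVne))))
      have he : encl Uw U' := lemL hπ hU'p hUwp hq (lo_mem hU'ne) hc h1
      have hWW : W' = W := by
        by_cases hWW : W' = W
        · exact hWW
        have hxin1 : lo W' ≤ x := by
          rw [← hloW']; exact le_trans hU'e.1 (lo_le hxV)
        have hxin2 : x ≤ hi W' := by
          rw [← hhiW']; exact le_trans (le_hi hxV) hU'e.2
        have heW : encl W' W := lemL hρ hW hW' (fun h => hWW h.symm) hxW hxin1 hxin2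
        have hloeq : lo W = lo W' := by
          refine le_antisymm ?_ heW.1
          rw [← hloUw, ← hloW']; exact he.1
        exact absurd (ρ.eq_of_mem_parts hW' hW (lo_mem hW'ne)
          (by rw [← hloeq]; exact lo_mem hWne)) hWW
      have : lo U' = lo Uw := by rw [hloW', hWW, ← hloUw]
      exact π.eq_of_mem_parts hU'p hUwp (lo_mem hU'ne) (this ▸ lo_mem hUwne)
  rw [key, hloUw, hhiUw]
  exact ⟨hUwp, rfl, rfl⟩

lemma univ_mem_top :
    (Finset.univ : Finset (Fin (n+1))) ∈
      (⊤ : Finpartition (Finset.univ : Finset (Fin (n+1)))).parts := by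
  have hne : (Finset.univ : Finset (Fin (n+1))) ≠ ⊥ := Finset.univ_nonempty.ne_empty
  obtain ⟨W, hW⟩ := (⊤ : Finpartition (Finset.univ : Finset (Fin (n+1)))).parts_nonempty hne
  have h2 := Finpartition.parts_top_subset _ hW
  rw [Finset.mem_singleton] at h2
  rwa [h2] at hW

lemma lo_univ : lo (Finset.univ : Finset (Fin (n+1))) = 0 :=
  le_antisymm (lo_le (mem_univ 0)) (Fin.zero_le _)

lemma hi_univ : hi (Finset.univ : Finset (Fin (n+1))) = Fin.last n :=
  le_antisymm (Fin.le_last _) (le_hi (mem_univ _))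

end NCAux

open Finset NCAux in
/-- For `π ∈ NC(n)` with `π ≪ 1ₙ` and unique outer block `V_o`, the map
`ρ ↦ {V ∈ π : V is ρ-special}` is a bijection from `{ρ ∈ NC(n) : π ≪ ρ ≪ 1ₙ}` onto the
collection of subsets `𝔙` of the blocks of `π` with `V_o ∈ 𝔙`. -/
theorem special_blocks_bijection (n : ℕ)
    (π : Finpartition (Finset.univ : Finset (Fin (n + 1)))) (hπ : IsNC π)
    (hπ1 : Ll π ⊤) (Vo : Finset (Fin (n + 1))) (hVo : Vo ∈ π.parts)
    (h0 : (0 : Fin (n + 1)) ∈ Vo) (hlast : Fin.last n ∈ Vo) :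
    Set.BijOn
      (fun ρ : Finpartition (Finset.univ : Finset (Fin (n + 1))) =>
        {V : Finset (Fin (n + 1)) | V ∈ π.parts ∧ IsSpecial ρ V})
      {ρ | IsNC ρ ∧ Ll π ρ ∧ Ll ρ ⊤}
      {𝔙 : Set (Finset (Fin (n + 1))) | 𝔙 ⊆ ↑π.parts ∧ Vo ∈ 𝔙} := by
  classical
  have hVone : Vo.Nonempty := ⟨0, h0⟩
  have hloVo : lo Vo = 0 := le_antisymm (lo_le h0) (Fin.zero_le _)
  have hhiVo : hi Vo = Fin.last n := le_antisymm (Fin.le_last _) (le_hi hlast)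
  refine ⟨?_, ?_, ?_⟩
  · -- MapsTo
    rintro ρ ⟨hρNC, hlπρ, hlrt⟩
    refine ⟨fun V hV => hV.1, hVo, ?_⟩
    obtain ⟨B, hB, hBmm⟩ := hlrt.2 _ univ_mem_top
    have huniv : (Finset.univ : Finset (Fin (n+1))).Nonempty := Finset.univ_nonempty
    obtain ⟨h0B, hlastB⟩ := hBmm huniv
    rw [min'_eq_lo huniv, lo_univ] at h0B
    rw [max'_eq_hi huniv, hi_univ] at hlastB
    have hBne : B.Nonempty := ⟨0, h0B⟩
    have hloB : lo B = 0 := le_antisymm (lo_le h0B) (Fin.zero_le _)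
    have hhiB : hi B = Fin.last n := le_antisymm (Fin.le_last _) (le_hi hlastB)
    refine ⟨B, hB, ?_, ?_⟩
    · rw [min_eq_lo hVone, min_eq_lo hBne, hloVo, hloB]
    · rw [max_eq_hi hVone, max_eq_hi hBne, hhiVo, hhiB]
  · -- InjOn
    rintro ρ₁ ⟨hNC₁, hl₁, -⟩ ρ₂ ⟨hNC₂, hl₂, -⟩ hS
    have hS' : Sp π ρ₁ = Sp π ρ₂ := hS
    have hiff : ∀ ρ', IsNC ρ' → Ll π ρ' → ∀ x y : Fin (n+1),
        (ρ'.part x = ρ'.part y ↔ fV π (Sp π ρ') (π.part x) = fV π (Sp π ρ') (π.part y)) := by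
      intro ρ' hNC' hl' x y
      obtain ⟨hpx, hlox, hhix⟩ := claimA hπ hNC' hl' x
      obtain ⟨hpy, hloy, hhiy⟩ := claimA hπ hNC' hl' y
      constructor
      · intro h
        refine π.eq_of_mem_parts hpx hpy (lo_mem (π.nonempty_of_mem_parts hpx)) ?_
        have : lo (fV π (Sp π ρ') (π.part x)) = lo (fV π (Sp π ρ') (π.part y)) := by
          rw [hlox, h, ← hloy]
        rw [this]
        exact lo_mem (π.nonempty_of_mem_parts hpy)
      · intro h
        have hx' : ρ'.part x ∈ ρ'.parts := ρ'.part_mem.2 (mem_univ x)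
        have hy' : ρ'.part y ∈ ρ'.parts := ρ'.part_mem.2 (mem_univ y)
        refine ρ'.eq_of_mem_parts hx' hy' (lo_mem ⟨x, ρ'.mem_part (mem_univ x)⟩) ?_
        have : lo (ρ'.part x) = lo (ρ'.part y) := by rw [← hlox, h, hloy]
        rw [this]
        exact lo_mem ⟨y, ρ'.mem_part (mem_univ y)⟩
    have hpart : ∀ x, ρ₁.part x = ρ₂.part x := by
      intro x
      ext y
      rw [ρ₁.mem_part_iff_part_eq_part (mem_univ y) (mem_univ x),
        ρ₂.mem_part_iff_part_eq_part (mem_univ y) (mem_univ x),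
        hiff ρ₁ hNC₁ hl₁ y x, hiff ρ₂ hNC₂ hl₂ y x, hS']
    apply Finpartition.ext
    ext W
    constructor
    · intro hW
      obtain ⟨x, hx⟩ := ρ₁.nonempty_of_mem_parts hW
      rw [← ρ₁.part_eq_of_mem hW hx, hpart x]
      exact ρ₂.part_mem.2 (mem_univ x)
    · intro hW
      obtain ⟨x, hx⟩ := ρ₂.nonempty_of_mem_parts hW
      rw [← ρ₂.part_eq_of_mem hW hx, ← hpart x]
      exact ρ₁.part_mem.2 (mem_univ x)
  · -- SurjOn
    rintro 𝔙 ⟨h𝔙sub, hVo𝔙⟩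
    have h𝔙p : ∀ {U}, U ∈ 𝔙 → U ∈ π.parts := fun hU => h𝔙sub hU
    -- candidates are always nonempty thanks to Vo
    have hcand_ne : ∀ {V}, V ∈ π.parts → (cand π 𝔙 V).Nonempty := by
      intro V hV
      refine ⟨Vo, mem_cand.2 ⟨hVo, hVo𝔙, ?_, ?_⟩⟩
      · rw [hloVo]; exact Fin.zero_le _
      · rw [hhiVo]; exact Fin.le_last _
    have hfVx : ∀ x : Fin (n+1), fV π 𝔙 (π.part x) ∈ π.parts ∧ fV π 𝔙 (π.part x) ∈ 𝔙 ∧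
        encl (fV π 𝔙 (π.part x)) (π.part x) :=
      fun x => mem_cand.1 (fV_mem_cand (hcand_ne (π.part_mem.2 (mem_univ x))))
    set fib : Finset (Fin (n+1)) → Finset (Fin (n+1)) :=
      fun U => Finset.univ.filter (fun y => fV π 𝔙 (π.part y) = U) with hfibdef
    have hUfib : ∀ {U}, U ∈ π.parts → U ∈ 𝔙 → U ⊆ fib U := by
      intro U hU hU𝔙 x hx
      simp only [hfibdef, Finset.mem_filter, mem_univ, true_and]
      rw [π.part_eq_of_mem hU hx]
      exact fV_self hπ hU hU𝔙
    have hfib_span : ∀ U, ∀ x ∈ fib U, lo U ≤ x ∧ x ≤ hi U := by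
      intro U x hx
      simp only [hfibdef, Finset.mem_filter, mem_univ, true_and] at hx
      have h := hfVx x
      rw [hx] at h
      exact ⟨le_trans h.2.2.1 (lo_le (π.mem_part (mem_univ x))),
        le_trans (le_hi (π.mem_part (mem_univ x))) h.2.2.2⟩
    have hfib_mem : ∀ {U x}, x ∈ fib U → fV π 𝔙 (π.part x) = U := by
      intro U x hx
      simpa [hfibdef] using hx
    have hfib_ne : ∀ {U}, U ∈ π.parts → U ∈ 𝔙 → (fib U).Nonempty := by
      intro U hU hU𝔙
      obtain ⟨x, hx⟩ := π.nonempty_of_mem_parts hU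
      exact ⟨x, hUfib hU hU𝔙 hx⟩
    have hfib_lo : ∀ {U}, U ∈ π.parts → U ∈ 𝔙 → lo (fib U) = lo U := by
      intro U hU hU𝔙
      refine le_antisymm (lo_le (hUfib hU hU𝔙 (lo_mem (π.nonempty_of_mem_parts hU)))) ?_
      exact (hfib_span U _ (lo_mem (hfib_ne hU hU𝔙))).1
    have hfib_hi : ∀ {U}, U ∈ π.parts → U ∈ 𝔙 → hi (fib U) = hi U := by
      intro U hU hU𝔙
      refine le_antisymm (hfib_span U _ (hi_mem (hfib_ne hU hU𝔙))).2 ?_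
      exact le_hi (hUfib hU hU𝔙 (hi_mem (π.nonempty_of_mem_parts hU)))
    set parts : Finset (Finset (Fin (n+1))) :=
      (π.parts.filter (· ∈ 𝔙)).image fib with hpartsdef
    have hmem_parts : ∀ {W}, W ∈ parts ↔ ∃ U, (U ∈ π.parts ∧ U ∈ 𝔙) ∧ fib U = W := by
      intro W
      simp [hpartsdef, Finset.mem_image, Finset.mem_filter]
    have hρ : ∃ ρ : Finpartition (Finset.univ : Finset (Fin (n+1))), ρ.parts = parts := by
      refine ⟨⟨parts, ?_, ?_, ?_⟩, rfl⟩
      · rw [Finset.supIndep_iff_pairwiseDisjoint]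
        intro A hA B hB hAB
        simp only [hpartsdef, Finset.coe_image, Set.mem_image] at hA hB
        show Disjoint A B
        rw [Finset.disjoint_left]
        intro x hxA hxB
        obtain ⟨U, hU, rfl⟩ := hA
        obtain ⟨U', hU', rfl⟩ := hB
        exact hAB (by rw [← hfib_mem hxA, hfib_mem hxB])
      · refine le_antisymm (Finset.sup_le fun A _ => Finset.subset_univ A) ?_
        intro x _
        rw [Finset.mem_sup]
        refine ⟨fib (fV π 𝔙 (π.part x)), ?_, ?_⟩
        · exact hmem_parts.2 ⟨fV π 𝔙 (π.part x), ⟨(hfVx x).1, (hfVx x).2.1⟩, rfl⟩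
        · exact Finset.mem_filter.2 ⟨Finset.mem_univ x, rfl⟩
      · intro h
        obtain ⟨U, ⟨hU, hU𝔙⟩, hfibU⟩ := hmem_parts.1 h
        obtain ⟨x, hx⟩ := hfib_ne hU hU𝔙
        rw [hfibU] at hx
        exact absurd hx (Finset.notMem_empty x)
    obtain ⟨ρ, hρparts⟩ := hρ
    have hmemρ : ∀ {W}, W ∈ ρ.parts ↔ ∃ U, (U ∈ π.parts ∧ U ∈ 𝔙) ∧ fib U = W := by
      intro W; rw [hρparts]; exact hmem_parts
    -- ρ is non-crossing
    have hρNC : IsNC ρ := by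
      intro a b c d hab hbc hcd A hA B hB haA hcA hbB hdB
      obtain ⟨U, ⟨hUp, hU𝔙⟩, rfl⟩ := hmemρ.1 hA
      obtain ⟨U', ⟨hU'p, hU'𝔙⟩, rfl⟩ := hmemρ.1 hB
      suffices hUU : U = U' by rw [hUU]
      have hbU : lo U ≤ b ∧ b ≤ hi U :=
        ⟨le_trans (hfib_span U a haA).1 hab.le, le_trans hbc.le (hfib_span U c hcA).2⟩
      have hcU' : lo U' ≤ c ∧ c ≤ hi U' :=
        ⟨le_trans (hfib_span U' b hbB).1 hbc.le, le_trans hcd.le (hfib_span U' d hdB).2⟩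
      have hfVb : fV π 𝔙 (π.part b) = U' := hfib_mem hbB
      have hfVc : fV π 𝔙 (π.part c) = U := hfib_mem hcA
      by_cases hVbU : π.part b = U
      · rw [hVbU, fV_self hπ hUp hU𝔙] at hfVb; exact hfVb
      by_cases hVcU' : π.part c = U'
      · rw [hVcU', fV_self hπ hU'p hU'𝔙] at hfVc; exact hfVc.symm
      have heb : encl U (π.part b) :=
        lemL hπ (π.part_mem.2 (mem_univ b)) hUp hVbU (π.mem_part (mem_univ b)) hbU.1 hbU.2
      have hec : encl U' (π.part c) :=
        lemL hπ (π.part_mem.2 (mem_univ c)) hU'p hVcU' (π.mem_part (mem_univ c)) hcU'.1 hcU'.2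
      have hUcand : U ∈ cand π 𝔙 (π.part b) := mem_cand.2 ⟨hUp, hU𝔙, heb⟩
      have hU'cand : U' ∈ cand π 𝔙 (π.part c) := mem_cand.2 ⟨hU'p, hU'𝔙, hec⟩
      have hk1 : key U' ≤ key U := by
        have := fV_min hUcand; rwa [hfVb] at this
      have hk2 : key U ≤ key U' := by
        have := fV_min hU'cand; rwa [hfVc] at this
      have := f_eq_of hπ (π.part_mem.2 (mem_univ b)) hUcand (by rw [hfVb]; exact hk2)
      rw [hfVb] at this
      exact this
    -- π ≪ ρ
    have hπρ : Ll π ρ := by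
      constructor
      · intro V hV
        refine ⟨fib (fV π 𝔙 V), ?_, ?_⟩
        · have hc := mem_cand.1 (fV_mem_cand (hcand_ne hV))
          exact hmemρ.2 ⟨fV π 𝔙 V, ⟨hc.1, hc.2.1⟩, rfl⟩
        · intro x hx
          simp only [hfibdef, Finset.mem_filter, mem_univ, true_and]
          rw [π.part_eq_of_mem hV hx]
      · intro W hW
        obtain ⟨U, ⟨hUp, hU𝔙⟩, rfl⟩ := hmemρ.1 hW
        refine ⟨U, hUp, fun hWne => ?_⟩
        rw [min'_eq_lo hWne, max'_eq_hi hWne, hfib_lo hUp hU𝔙, hfib_hi hUp hU𝔙]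
        exact ⟨lo_mem (π.nonempty_of_mem_parts hUp), hi_mem (π.nonempty_of_mem_parts hUp)⟩
    -- ρ ≪ ⊤
    have hrt : Ll ρ ⊤ := by
      constructor
      · exact le_top
      · intro W hW
        have hWuniv : W = Finset.univ := by
          have := Finpartition.parts_top_subset _ hW
          rwa [Finset.mem_singleton] at this
        subst hWuniv
        refine ⟨fib Vo, hmemρ.2 ⟨Vo, ⟨hVo, hVo𝔙⟩, rfl⟩, fun hne => ?_⟩
        rw [min'_eq_lo hne, max'_eq_hi hne, lo_univ, hi_univ]
        exact ⟨hUfib hVo hVo𝔙 (hloVo ▸ lo_mem hVone), hUfib hVo hVo𝔙 (hhiVo ▸ hi_mem hVone)⟩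
    refine ⟨ρ, ⟨hρNC, hπρ, hrt⟩, ?_⟩
    -- the special blocks of ρ are exactly 𝔙
    ext V
    simp only [Set.mem_setOf_eq]
    constructor
    · rintro ⟨hVp, W, hW, hminEq, hmaxEq⟩
      obtain ⟨U, ⟨hUp, hU𝔙⟩, rfl⟩ := hmemρ.1 hW
      have hloV : lo V = lo U := by
        rw [lo_eq_of_min_eq hminEq, hfib_lo hUp hU𝔙]
      have : V = U := π.eq_of_mem_parts hVp hUp (lo_mem (π.nonempty_of_mem_parts hVp))
        (hloV ▸ lo_mem (π.nonempty_of_mem_parts hUp))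
      rwa [this]
    · intro hV𝔙
      have hVp : V ∈ π.parts := h𝔙p hV𝔙
      have hVne : V.Nonempty := π.nonempty_of_mem_parts hVp
      refine ⟨hVp, fib V, hmemρ.2 ⟨V, ⟨hVp, hV𝔙⟩, rfl⟩, ?_, ?_⟩
      · rw [min_eq_lo hVne, min_eq_lo (hfib_ne hVp hV𝔙), hfib_lo hVp hV𝔙]
      · rw [max_eq_hi hVne, max_eq_hi (hfib_ne hVp hV𝔙), hfib_hi hVp hV𝔙]
end

section
/- Let B be a unital C*-algebra, μ ∈ Σ(B) a positive B-valued distribution, and α : B → B of the form α[b] = (1+e) b (1+e*) for some e ∈ B. Suppose Y and Q are Boolean independent over B in a B-valued probability space (M, E) with M = B ⊕ M_0, Y = Y* ∈ M_0 has moment series equal to the B-transform of μ (M_Y = B_μ), E(Q) = e, and Var_Q(b) := E((1+Q*)b(1+Q)) − E(1+Q*)bE(1+Q) = b for all b ∈ B. Then T = (1+Q) Y (1+Q*) has distribution μ^{⊎α}; in particular, B_T^[n](b_1,…,b_{n−1}) = (1+e) B_μ^[n](b_1,…,b_{n−1}) (1+e*) for all n. -/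
/-! An operator model for Boolean convolution powers `μ^{⊎α}` with
`α[b] = (1+e) b (1+e*)`. -/

/-- All compositions of `n` (ordered lists of positive integers summing to `n`). -/
def comps : ℕ → List (List ℕ)
  | 0 => [[]]
  | n + 1 =>
      (List.range (n + 1)).flatMap fun s =>
        (comps (n - s)).map fun rest => (s + 1) :: rest
  decreasing_by omega

section Defs

variable {B : Type*} [Ring B]

/-- For a composition `[m_1,…,m_k]` of `n`, a Boolean cumulant function `f` and a list
`[b_1,…,b_{n-1}]`, the product `f(b_1,…,b_{m_1−1}) b_{m_1} f(b_{m_1+1},…) ⋯`; the moment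
`M_μ^[n]` is the sum of these over all compositions of `n` (equivalently over all interval
partitions `Int(n)`), which is how the `B`-transform `B_μ = f` is defined. -/
def termOfC (f : List B → B) : List ℕ → List B → B
  | [], _ => 1
  | [m], l => f (l.take (m - 1))
  | m :: m' :: rest, l =>
      f (l.take (m - 1)) * l.getD (m - 1) 1 * termOfC f (m' :: rest) (l.drop m)

/-- The moments determined by a Boolean cumulant function `f` (`f` applied to the empty list
is the first Boolean cumulant `B^[1]`): `M^[n] = Σ_{π ∈ Int(n)} B^[π]`. -/
def boolMom (f : List B → B) (l : List B) : B :=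
  ((comps (l.length + 1)).map fun c => termOfC f c l).sum

variable {M : Type*} [Ring M] [Algebra ℂ M]

/-- The word `x b_1 x b_2 ⋯ x b_{n-1} x` in a noncommutative probability space. -/
def word (ι : B → M) (x : M) : List B → M
  | [] => x
  | b :: r => x * ι b * word ι x r

end Defs

/-- The `*`- and `B`-bimodule-closed generating set determined by an element `x`:
`{ι(b) x ι(b'), ι(b) x* ι(b')}`. -/
def genS {B M : Type*} [Ring B] [Ring M] [Algebra ℂ B] [Algebra ℂ M] [StarRing B] [StarRing M]
    (ι : B →⋆ₐ[ℂ] M) (x : M) : Set M :=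
  {m | ∃ b b' : B, m = ι b * x * ι b' ∨ m = ι b * star x * ι b'}

namespace BoolModelAux

lemma comps_ne_nil {n : ℕ} {c : List ℕ} (hc : c ∈ comps (n + 1)) : c ≠ [] := by
  rw [comps] at hc
  simp only [List.mem_flatMap, List.mem_map] at hc
  obtain ⟨s, -, rest, -, rfl⟩ := hc
  simp

variable {B M : Type*} [Ring B] [Ring M] [Algebra ℂ B] [Algebra ℂ M] [StarRing B] [StarRing M]

/-- `R_b = Q* b + b Q + Q* b Q`, so that `(1+Q*) b (1+Q) = b + R_b`. -/
def Rw (ι : B →⋆ₐ[ℂ] M) (Q : M) (b : B) : M :=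
  star Q * ι b + ι b * Q + star Q * ι b * Q

/-- The inner part of the word in `T`: `word T l = (1+Q) * Vw l * (1+Q*)`. -/
def Vw (ι : B →⋆ₐ[ℂ] M) (Q Y : M) : List B → M
  | [] => Y
  | b :: r => Y * (ι b + Rw ι Q b) * Vw ι Q Y r

/-- The alternating list of factors corresponding to a composition `c`. -/
def mkL (ι : B →⋆ₐ[ℂ] M) (Q Y : M) : List ℕ → List B → List (M × Bool)
  | [], _ => []
  | [m], l => [(word (fun b => ι b) Y (l.take (m - 1)), true)]
  | m :: m' :: rest, l =>
      (word (fun b => ι b) Y (l.take (m - 1)), true) ::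
      (Rw ι Q (l.getD (m - 1) 1), false) :: mkL ι Q Y (m' :: rest) (l.drop m)

variable (ι : B →⋆ₐ[ℂ] M) (Q Y : M)


lemma key_ring (b : B) : (1 + star Q) * ι b * (1 + Q) = ι b + Rw ι Q b := by
  simp only [Rw]; noncomm_ring

lemma word_T (l : List B) :
    word (fun b => ι b) ((1 + Q) * Y * (1 + star Q)) l = (1 + Q) * Vw ι Q Y l * (1 + star Q) := by
  induction l with
  | nil => rfl
  | cons b r ih =>
      show (1 + Q) * Y * (1 + star Q) * ι b * word (fun b => ι b) ((1 + Q) * Y * (1 + star Q)) r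
        = _
      rw [ih]
      show _ = (1 + Q) * (Y * (ι b + Rw ι Q b) * Vw ι Q Y r) * (1 + star Q)
      rw [← key_ring ι Q b]
      noncomm_ring

/-- Product of factors of a composition. -/
abbrev Wprod (c : List ℕ) (l : List B) : M := ((mkL ι Q Y c l).map Prod.fst).prod

lemma Wprod_one_cons (m' : ℕ) (c : List ℕ) (b : B) (r : List B) :
    Wprod ι Q Y (1 :: m' :: c) (b :: r) = Y * Rw ι Q b * Wprod ι Q Y (m' :: c) r := by
  simp only [Wprod, mkL, List.map_cons, List.prod_cons]
  simp [word, mul_assoc]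

lemma Wprod_succ_cons (s : ℕ) (c : List ℕ) (b : B) (r : List B) :
    Wprod ι Q Y ((s + 2) :: c) (b :: r) = Y * ι b * Wprod ι Q Y ((s + 1) :: c) r := by
  cases c with
  | nil =>
      simp only [Wprod, mkL, List.map_cons, List.map_nil, List.prod_cons, List.prod_nil]
      simp [word, List.take_succ_cons, mul_assoc]
  | cons m' rest =>
      simp only [Wprod, mkL, List.map_cons, List.prod_cons, show s + 2 - 1 = s + 1 by omega,
        Nat.add_sub_cancel, List.take_succ_cons,
        List.getD_cons_succ, List.drop_succ_cons, word]
      noncomm_ring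

lemma Vw_eq_sum (l : List B) :
    Vw ι Q Y l = ((comps (l.length + 1)).map fun c => Wprod ι Q Y c l).sum := by
  induction l with
  | nil =>
      simp [comps, Vw, Wprod, mkL, word, List.range_succ]
  | cons b r ih =>
      show Y * (ι b + Rw ι Q b) * Vw ι Q Y r = _
      rw [comps, List.range_succ_eq_map, List.flatMap_cons, List.flatMap_map,
        List.map_append, List.sum_append]
      simp only [List.length_cons, Nat.succ_eq_add_one]
      have h0 : (((comps (r.length + 1 - 0)).map fun rest => (0 + 1) :: rest).map
          (fun c => Wprod ι Q Y c (b :: r))).sum = Y * Rw ι Q b * Vw ι Q Y r := by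
        rw [ih, List.map_map, ← List.sum_map_mul_left]
        congr 1
        refine List.map_congr_left fun c hc => ?_
        obtain ⟨m', rest, rfl⟩ := List.exists_cons_of_ne_nil (comps_ne_nil (by simpa using hc))
        exact Wprod_one_cons ι Q Y m' rest b r
      have h1 : (((List.range (r.length + 1)).flatMap fun s =>
            (comps (r.length + 1 - (s + 1))).map fun rest => (s + 1 + 1) :: rest).map
            (fun c => Wprod ι Q Y c (b :: r))).sum
          = Y * ι b * Vw ι Q Y r := by
        rw [ih, comps, ← List.sum_map_mul_left, List.map_flatMap, List.map_flatMap]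
        congr 1
        congr 1
        funext s
        rw [Nat.add_sub_add_right, List.map_map, List.map_map]
        congr 1
        funext c
        exact Wprod_succ_cons ι Q Y s c b r
      rw [h0, h1]
      noncomm_ring

lemma word_mem (l : List B) :
    word (fun b => ι b) Y l ∈ NonUnitalAlgebra.adjoin ℂ (genS ι Y) := by
  induction l with
  | nil =>
      exact NonUnitalAlgebra.subset_adjoin ℂ ⟨1, 1, Or.inl (by simp [word])⟩
  | cons b r ih =>
      show Y * ι b * word (fun b => ι b) Y r ∈ _
      exact mul_mem (NonUnitalAlgebra.subset_adjoin ℂ ⟨1, b, Or.inl (by simp)⟩) ih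

lemma Rw_mem (b : B) : Rw ι Q b ∈ NonUnitalAlgebra.adjoin ℂ (genS ι Q) := by
  have h1 : star Q * ι b ∈ NonUnitalAlgebra.adjoin ℂ (genS ι Q) :=
    NonUnitalAlgebra.subset_adjoin ℂ ⟨1, b, Or.inr (by simp)⟩
  have h2 : ι b * Q ∈ NonUnitalAlgebra.adjoin ℂ (genS ι Q) :=
    NonUnitalAlgebra.subset_adjoin ℂ ⟨b, 1, Or.inl (by simp)⟩
  have h3 : Q ∈ NonUnitalAlgebra.adjoin ℂ (genS ι Q) :=
    NonUnitalAlgebra.subset_adjoin ℂ ⟨1, 1, Or.inl (by simp)⟩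
  exact add_mem (add_mem h1 h2) (mul_mem h1 h3)

lemma Q_mem : Q ∈ NonUnitalAlgebra.adjoin ℂ (genS ι Q) :=
  NonUnitalAlgebra.subset_adjoin ℂ ⟨1, 1, Or.inl (by simp)⟩

lemma starQ_mem : star Q ∈ NonUnitalAlgebra.adjoin ℂ (genS ι Q) :=
  NonUnitalAlgebra.subset_adjoin ℂ ⟨1, 1, Or.inr (by simp)⟩

lemma mkL_mem : ∀ (c : List ℕ) (l : List B), ∀ p ∈ mkL ι Q Y c l,
    p.1 ∈ (if p.2 then NonUnitalAlgebra.adjoin ℂ (genS ι Y)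
      else NonUnitalAlgebra.adjoin ℂ (genS ι Q))
  | [], _, p, hp => by simp [mkL] at hp
  | [m], l, p, hp => by
      simp only [mkL, List.mem_singleton] at hp
      subst hp
      simpa using word_mem ι Y _
  | m :: m' :: rest, l, p, hp => by
      simp only [mkL, List.mem_cons] at hp
      rcases hp with rfl | rfl | hp
      · simpa using word_mem ι Y _
      · simpa using Rw_mem ι Q _
      · exact mkL_mem (m' :: rest) (l.drop m) p hp

lemma chain_mkL : ∀ (c : List ℕ) (l : List B) (x y : M × Bool), x.2 = false → y.2 = false →
    c ≠ [] → List.Chain' (fun p q : M × Bool => p.2 ≠ q.2) (x :: (mkL ι Q Y c l ++ [y]))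
  | [], _, x, y, hx, hy, hc => absurd rfl hc
  | [m], l, x, y, hx, hy, _ => by
      simp [mkL, List.Chain', List.isChain_cons_cons, hx, hy]
  | m :: m' :: rest, l, x, y, hx, hy, _ => by
      show List.Chain' _ (x :: (_, true) :: (Rw ι Q _, false) :: (mkL ι Q Y (m' :: rest) (l.drop m) ++ [y]))
      rw [List.Chain', List.isChain_cons_cons, List.isChain_cons_cons]
      exact ⟨by simp [hx], by simp, chain_mkL (m' :: rest) (l.drop m) _ y rfl hy (by simp)⟩

lemma chain_mkL' (c : List ℕ) (l : List B) (x : M × Bool) (hx : x.2 = false) :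
    List.Chain' (fun p q : M × Bool => p.2 ≠ q.2) (x :: mkL ι Q Y c l) := by
  rcases eq_or_ne c [] with rfl | hc
  · simp [mkL, List.Chain']
  have h := chain_mkL ι Q Y c l x (1, false) hx rfl hc
  rw [show x :: (mkL ι Q Y c l ++ [((1 : M), false)])
      = (x :: mkL ι Q Y c l) ++ [((1 : M), false)] from rfl] at h
  exact h.left_of_append

lemma chain_mkL'' (c : List ℕ) (l : List B) :
    List.Chain' (fun p q : M × Bool => p.2 ≠ q.2) (mkL ι Q Y c l) :=
  (chain_mkL' ι Q Y c l (1, false) rfl).tail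

lemma mul_sum_mul {α : Type*} (a b : M) (L : List α) (f : α → M) :
    a * (L.map f).sum * b = (L.map fun x => a * f x * b).sum := by
  induction L with
  | nil => simp
  | cons x t ih => simp only [List.map_cons, List.sum_cons, ← ih]; noncomm_ring

section WithE

variable (E : M →ₗ[ℂ] B)

lemma E_core
    (hBool : ∀ xs : List (M × Bool),
      (∀ p ∈ xs, p.1 ∈
        (if p.2 then NonUnitalAlgebra.adjoin ℂ (genS ι Y)
          else NonUnitalAlgebra.adjoin ℂ (genS ι Q))) →
      List.Chain' (fun p q => p.2 ≠ q.2) xs →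
      E (xs.map Prod.fst).prod = ((xs.map fun p => E p.1).prod))
    (c : List ℕ) (l : List B) (hc : c ≠ []) :
    E ((1 + Q) * Wprod ι Q Y c l * (1 + star Q))
      = (1 + E Q) * ((mkL ι Q Y c l).map fun p => E p.1).prod * (1 + E (star Q)) := by
  set L := mkL ι Q Y c l with hL
  have h1 : E (L.map Prod.fst).prod = (L.map fun p => E p.1).prod :=
    hBool L (mkL_mem ι Q Y c l) (chain_mkL'' ι Q Y c l)
  have h2 : E (Q * (L.map Prod.fst).prod) = E Q * (L.map fun p => E p.1).prod := by
    have h := hBool ((Q, false) :: L) ?_ (chain_mkL' ι Q Y c l _ rfl)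
    · simpa using h
    · intro p hp
      rcases List.mem_cons.1 hp with rfl | hp
      · simpa using Q_mem ι Q
      · exact mkL_mem ι Q Y c l p hp
  have h3 : E ((L.map Prod.fst).prod * star Q)
      = (L.map fun p => E p.1).prod * E (star Q) := by
    have h := hBool (L ++ [(star Q, false)]) ?_
      ((chain_mkL ι Q Y c l (1, false) (star Q, false) rfl rfl hc).tail)
    · simpa using h
    · intro p hp
      rcases List.mem_append.1 hp with hp | hp
      · exact mkL_mem ι Q Y c l p hp
      · rw [List.mem_singleton] at hp
        subst hp
        simpa using starQ_mem ι Q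
  have h4 : E (Q * (L.map Prod.fst).prod * star Q)
      = E Q * (L.map fun p => E p.1).prod * E (star Q) := by
    have h := hBool ((Q, false) :: (L ++ [(star Q, false)]))
      ?_ (chain_mkL ι Q Y c l _ _ rfl rfl hc)
    · simpa [mul_assoc] using h
    · intro p hp
      rcases List.mem_cons.1 hp with rfl | hp
      · simpa using Q_mem ι Q
      rcases List.mem_append.1 hp with hp | hp
      · exact mkL_mem ι Q Y c l p hp
      · rw [List.mem_singleton] at hp
        subst hp
        simpa using starQ_mem ι Q
  have expand : (1 + Q) * (L.map Prod.fst).prod * (1 + star Q)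
      = (L.map Prod.fst).prod + Q * (L.map Prod.fst).prod
        + (L.map Prod.fst).prod * star Q + Q * (L.map Prod.fst).prod * star Q := by
    noncomm_ring
  rw [show Wprod ι Q Y c l = (L.map Prod.fst).prod from rfl, expand, map_add, map_add, map_add,
    h1, h2, h3, h4]
  noncomm_ring

lemma P_eq_term (e : B) (Bf : List B → B)
    (hYmom : ∀ l : List B, E (word (fun b => ι b) Y l) = Bf l)
    (hRw : ∀ b : B, E (Rw ι Q b) = (1 + star e) * b * (1 + e)) :
    ∀ (c : List ℕ) (l : List B), c ≠ [] →
      (1 + e) * ((mkL ι Q Y c l).map fun p => E p.1).prod * (1 + star e)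
        = termOfC (fun l' => (1 + e) * Bf l' * (1 + star e)) c l
  | [], _, hc => absurd rfl hc
  | [m], l, _ => by simp [mkL, termOfC, hYmom]
  | m :: m' :: rest, l, _ => by
      show _ = (1 + e) * Bf (l.take (m - 1)) * (1 + star e) * l.getD (m - 1) 1 *
          termOfC (fun l' => (1 + e) * Bf l' * (1 + star e)) (m' :: rest) (l.drop m)
      rw [← P_eq_term e Bf hYmom hRw (m' :: rest) (l.drop m) (by simp)]
      simp only [mkL, List.map_cons, List.prod_cons, hYmom, hRw]
      noncomm_ring

end WithE

end BoolModelAux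

/-- Let `(M, E)` be a `B`-valued C*-probability space, `μ ∈ Σ(B)` a positive `B`-valued
distribution with `B`-transform `Bf`, and `α : B → B` the completely positive map
`α[b] = (1+e) b (1+e*)`.  Suppose `Y = Y*` and `Q` are Boolean independent over `B`
(the non-unital `*`-subalgebras over `B` they generate satisfy the Boolean factorization
property for alternating words), with `M_Y = B_μ` (i.e. `E[Y b_1 Y ⋯ Y] = Bf [b_1,…]`),
`E(Q) = e` and `Var_Q(b) = E((1+Q*) b (1+Q)) − E(1+Q*) b E(1+Q) = b`.  Then
`T = (1+Q) Y (1+Q*)` has distribution `μ^{⊎α}`; in particular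
`B_T^[n](b_1,…,b_{n−1}) = (1+e) B_μ^[n](b_1,…,b_{n−1}) (1+e*)` for all `n`, i.e. the moments
of `T` are the Boolean-cumulant-to-moment sums of `(1+e) Bf (1+e*)`. -/
theorem boolean_power_operator_model
    (B M : Type*)
    [NormedRing B] [StarRing B] [CStarRing B] [NormedAlgebra ℂ B]
    [PartialOrder B] [StarOrderedRing B]
    [NormedRing M] [StarRing M] [CStarRing M] [NormedAlgebra ℂ M]
    (ι : B →⋆ₐ[ℂ] M) (E : M →ₗ[ℂ] B)
    (hEι : ∀ b : B, E (ι b) = b)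
    (hEbimod : ∀ (b b' : B) (m : M), E (ι b * m * ι b') = b * E m * b')
    (hEpos : ∀ m : M, 0 ≤ E (star m * m))
    (hEstar : ∀ m : M, E (star m) = star (E m))
    (Y Q : M) (e : B)
    (hY : star Y = Y)
    (hBool : ∀ xs : List (M × Bool),
      (∀ p ∈ xs, p.1 ∈
        (if p.2 then NonUnitalAlgebra.adjoin ℂ (genS ι Y)
          else NonUnitalAlgebra.adjoin ℂ (genS ι Q))) →
      List.Chain' (fun p q => p.2 ≠ q.2) xs →
      E (xs.map Prod.fst).prod = ((xs.map fun p => E p.1).prod))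
    (Bf : List B → B)
    (hμpos : ∀ (k : ℕ) (P : Fin k → List B) (c : Fin k → B),
      0 ≤ ∑ i : Fin k, ∑ j : Fin k,
        star (c i) * boolMom Bf (((P i).map star).reverse ++ (1 : B) :: (P j)) * c j)
    (hYmom : ∀ l : List B, E (word (fun b => ι b) Y l) = Bf l)
    (hQe : E Q = e)
    (hVar : ∀ b : B, E ((1 + star Q) * ι b * (1 + Q)) = b + (1 + star e) * b * (1 + e)) :
    ∀ l : List B,
      E (word (fun b => ι b) ((1 + Q) * Y * (1 + star Q)) l) =
        boolMom (fun l' => (1 + e) * Bf l' * (1 + star e)) l := by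
  intro l
  classical
  have hRw : ∀ b : B, E (BoolModelAux.Rw ι Q b) = (1 + star e) * b * (1 + e) := by
    intro b
    have h := hVar b
    rw [BoolModelAux.key_ring ι Q b, map_add, hEι] at h
    exact add_left_cancel h
  rw [BoolModelAux.word_T ι Q Y l, BoolModelAux.Vw_eq_sum ι Q Y l,
    BoolModelAux.mul_sum_mul, map_list_sum, List.map_map, boolMom]
  refine congrArg List.sum (List.map_congr_left fun c hc => ?_)
  have hc' := BoolModelAux.comps_ne_nil hc
  show E ((1 + Q) * BoolModelAux.Wprod ι Q Y c l * (1 + star Q)) = _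
  rw [BoolModelAux.E_core ι Q Y E hBool c l hc', hQe, hEstar, hQe]
  exact BoolModelAux.P_eq_term ι Q Y E e Bf hYmom hRw c l hc'
end
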